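/- For every topological space $X$ and every nonempty open subset $U$ of $X$, there exists a nonempty open subset $V \subseteq U$ such that the subspace $V$ is isodyne, i.e. every nonempty relatively open subset of $V$ has cardinality $|V|$. -/
import Mathlib


open Cardinal Set

/-- Every nonempty open set `U` contains a nonempty open set `V` whose
subspace is isodyne: every nonempty relatively open subset of `V` has cardinality `|V|`. -/
theorem stmt5 (X : Type*) [TopologicalSpace X] (U : Set X) (hU : IsOpen U) (hne : U.Nonempty) :
    ∃ V : Set X, IsOpen V ∧ V.Nonempty ∧ V ⊆ U ∧
      ∀ W : Set X, IsOpen W → (W ∩ V).Nonempty → #(W ∩ V : Set X) = #V := by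
  obtain ⟨c, ⟨V, ⟨hVo, hVne, hVU⟩, rfl⟩, hmin⟩ :=
    Cardinal.lt_wf.has_min ((fun V : Set X => #V) '' {V : Set X | IsOpen V ∧ V.Nonempty ∧ V ⊆ U})
      ⟨#U, U, ⟨hU, hne, le_rfl⟩, rfl⟩
  refine ⟨V, hVo, hVne, hVU, fun W hW hWV => ?_⟩
  refine le_antisymm (Cardinal.mk_le_mk_of_subset inter_subset_right) ?_
  exact not_lt.mp (hmin _ ⟨W ∩ V, ⟨hW.inter hVo, hWV, inter_subset_right.trans hVU⟩, rfl⟩)
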